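/- Let 1 ≤ M ≤ N−1, let 1 ≤ i ≤ M, and set c = k_i + k_{N−M+i}, S₁ = {1,…,i} ∪ {N−M+i+1, …, N} and S₂ = {1,…,i−1} ∪ {N−M+i, …, N}. Then Σ_{j∈S₁} η_j(c) = Σ_{j∈S₂} η_j(c), and for every M-element subset S of {1,…,N} with S ≠ S₁ and S ≠ S₂ one has Σ_{j∈S} η_j(c) < Σ_{j∈S₁} η_j(c). That is, the maximum of S ↦ Σ_{j∈S} η_j(c) over M-element subsets is attained exactly at S₁ and S₂. -/

import Mathlib

/-- For 1 ≤ M ≤ N−1, 1 ≤ i ≤ M and c = k_i + k_{N−M+i}, with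
S₁ = {1,…,i} ∪ {N−M+i+1,…,N} and S₂ = {1,…,i−1} ∪ {N−M+i,…,N}, the sums
Σ_{j∈S₁} η_j(c) and Σ_{j∈S₂} η_j(c) agree, and every other M-element subset S
of {1,…,N} has a strictly smaller sum: the maximum of S ↦ Σ_{j∈S} η_j(c)
is attained exactly at S₁ and S₂. -/
theorem dominant_balance_max
    (N : ℕ) (hN : 2 ≤ N)
    (k : ℕ → ℝ)
    (hk : ∀ a b, 1 ≤ a → a < b → b ≤ N → k a < k b)
    (η : ℕ → ℝ → ℝ)
    (hη : ∀ i c, η i c = k i * (k i - c))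
    (M : ℕ) (hM1 : 1 ≤ M) (hM2 : M ≤ N - 1)
    (i : ℕ) (hi1 : 1 ≤ i) (hi2 : i ≤ M)
    (c : ℝ) (hc : c = k i + k (N - M + i)) :
    (∑ j ∈ Finset.Icc 1 i ∪ Finset.Icc (N - M + i + 1) N, η j c)
        = (∑ j ∈ Finset.Icc 1 (i - 1) ∪ Finset.Icc (N - M + i) N, η j c) ∧
    ∀ S ∈ Finset.powersetCard M (Finset.Icc 1 N),
      S ≠ Finset.Icc 1 i ∪ Finset.Icc (N - M + i + 1) N →
      S ≠ Finset.Icc 1 (i - 1) ∪ Finset.Icc (N - M + i) N →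
        (∑ j ∈ S, η j c) < ∑ j ∈ Finset.Icc 1 i ∪ Finset.Icc (N - M + i + 1) N, η j c := by
  have hMN : M ≤ N := le_trans hM2 (Nat.sub_le N 1)
  set n := N - M + i with hn
  have hin : i < n := by omega
  have hnN : n ≤ N := by omega
  have hkin : k i < k n := hk i n hi1 hin hnN
  -- the shifted weight
  set g : ℕ → ℝ := fun j => (k j - k i) * (k j - k n) with hg
  have heta : ∀ j, η j c = g j - k i * k n := by
    intro j; rw [hη, hc, hg]; ring
  have htrans : ∀ T : Finset ℕ,
      (∑ j ∈ T, η j c) = (∑ j ∈ T, g j) - T.card * (k i * k n) := by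
    intro T
    rw [Finset.sum_congr rfl (fun j _ => heta j), Finset.sum_sub_distrib,
      Finset.sum_const, nsmul_eq_mul]
  have hzi : g i = 0 := by rw [hg]; ring_nf
  have hzn : g n = 0 := by rw [hg]; ring_nf
  have hpos : ∀ j, 1 ≤ j → j ≤ N → (j < i ∨ n < j) → 0 < g j := by
    intro j hj1 hjN hj
    rcases hj with h | h
    · have h1 : k j < k i := hk j i hj1 h (by omega)
      have h2 : k j < k n := hk j n hj1 (by omega) hnN
      exact mul_pos_of_neg_of_neg (by linarith) (by linarith)
    · have h1 : k i < k j := hk i j hi1 (by omega) hjN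
      have h2 : k n < k j := hk n j (by omega) h hjN
      exact mul_pos (by linarith) (by linarith)
  have hneg : ∀ j, i < j → j < n → g j < 0 := by
    intro j h1 h2
    have hk1 : k i < k j := hk i j hi1 h1 (by omega)
    have hk2 : k j < k n := hk j n (by omega) h2 hnN
    exact mul_neg_of_pos_of_neg (by linarith) (by linarith)
  set P : Finset ℕ := Finset.Icc 1 (i - 1) ∪ Finset.Icc (n + 1) N with hP
  have hPmem : ∀ x, x ∈ P ↔ (1 ≤ x ∧ x ≤ i - 1) ∨ (n + 1 ≤ x ∧ x ≤ N) := by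
    intro x; simp [hP, Finset.mem_Icc]
  have hPcard : P.card = M - 1 := by
    rw [hP, Finset.card_union_of_disjoint, Nat.card_Icc, Nat.card_Icc]
    · omega
    · rw [Finset.disjoint_left]
      intro x hx1 hx2
      simp only [Finset.mem_Icc] at hx1 hx2
      omega
  have hiP : i ∉ P := by rw [hPmem]; omega
  have hnP : n ∉ P := by rw [hPmem]; omega
  have hS1 : Finset.Icc 1 i ∪ Finset.Icc (n + 1) N = insert i P := by
    ext x; simp only [Finset.mem_union, Finset.mem_Icc, Finset.mem_insert, hPmem]; omega
  have hS2 : Finset.Icc 1 (i - 1) ∪ Finset.Icc n N = insert n P := by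
    ext x; simp only [Finset.mem_union, Finset.mem_Icc, Finset.mem_insert, hPmem]; omega
  have hcard1 : (Finset.Icc 1 i ∪ Finset.Icc (n + 1) N).card = M := by
    rw [hS1, Finset.card_insert_of_notMem hiP, hPcard]; omega
  have hcard2 : (Finset.Icc 1 (i - 1) ∪ Finset.Icc n N).card = M := by
    rw [hS2, Finset.card_insert_of_notMem hnP, hPcard]; omega
  have hgsum1 : (∑ j ∈ Finset.Icc 1 i ∪ Finset.Icc (n + 1) N, g j) = ∑ j ∈ P, g j := by
    rw [hS1, Finset.sum_insert hiP, hzi, zero_add]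
  have hgsum2 : (∑ j ∈ Finset.Icc 1 (i - 1) ∪ Finset.Icc n N, g j) = ∑ j ∈ P, g j := by
    rw [hS2, Finset.sum_insert hnP, hzn, zero_add]
  have hsum1 : (∑ j ∈ Finset.Icc 1 i ∪ Finset.Icc (n + 1) N, η j c)
      = (∑ j ∈ P, g j) - M * (k i * k n) := by
    rw [htrans, hgsum1, hcard1]
  have hsum2 : (∑ j ∈ Finset.Icc 1 (i - 1) ∪ Finset.Icc n N, η j c)
      = (∑ j ∈ P, g j) - M * (k i * k n) := by
    rw [htrans, hgsum2, hcard2]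
  constructor
  · rw [hsum1, hsum2]
  · intro S hS hne1 hne2
    rw [Finset.mem_powersetCard] at hS
    obtain ⟨hSsub, hScard⟩ := hS
    rw [hsum1, htrans, hScard]
    have hgoal : (∑ j ∈ S, g j) < ∑ j ∈ P, g j → (∑ j ∈ S, g j) - M * (k i * k n)
        < (∑ j ∈ P, g j) - M * (k i * k n) := fun h => by linarith
    apply hgoal
    have hSN : ∀ x ∈ S, 1 ≤ x ∧ x ≤ N := by
      intro x hx
      have := hSsub hx
      simpa [Finset.mem_Icc] using this
    have hsplit : (∑ j ∈ S, g j) = (∑ j ∈ S ∩ P, g j) + ∑ j ∈ S \ P, g j :=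
      (Finset.sum_inter_add_sum_sdiff S P _).symm
    have hPsplit : (∑ j ∈ P, g j) = (∑ j ∈ S ∩ P, g j) + ∑ j ∈ P \ S, g j := by
      rw [Finset.inter_comm, Finset.sum_inter_add_sum_sdiff]
    have hdiff_nonpos : ∀ j ∈ S \ P, g j ≤ 0 := by
      intro j hj
      rw [Finset.mem_sdiff] at hj
      obtain ⟨hj1, hjN⟩ := hSN j hj.1
      have hjrange : i ≤ j ∧ j ≤ n := by
        by_contra hcon
        exact hj.2 ((hPmem j).2 (by omega))
      rcases eq_or_lt_of_le hjrange.1 with h | h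
      · rw [← h, hzi]
      · rcases eq_or_lt_of_le hjrange.2 with h' | h'
        · rw [h', hzn]
        · exact le_of_lt (hneg j h h')
    by_cases hPS : P ⊆ S
    · have hcardd : (S \ P).card = 1 := by
        rw [Finset.card_sdiff_of_subset hPS, hScard, hPcard]; omega
      obtain ⟨x, hx⟩ := Finset.card_eq_one.mp hcardd
      have hxS : x ∈ S \ P := by rw [hx]; exact Finset.mem_singleton_self x
      rw [Finset.mem_sdiff] at hxS
      obtain ⟨hx1, hxN⟩ := hSN x hxS.1
      have hxrange : i ≤ x ∧ x ≤ n := by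
        by_contra hcon
        exact hxS.2 ((hPmem x).2 (by omega))
      have hSx : S = insert x P := by
        ext a
        simp only [Finset.mem_insert]
        constructor
        · intro ha
          by_cases haP : a ∈ P
          · exact Or.inr haP
          · left
            have : a ∈ S \ P := Finset.mem_sdiff.mpr ⟨ha, haP⟩
            rw [hx] at this
            exact Finset.mem_singleton.mp this
        · rintro (rfl | ha)
          · exact hxS.1
          · exact hPS ha
      have hxi : x ≠ i := by
        intro h
        exact hne1 (by rw [hSx, h, hS1])
      have hxn : x ≠ n := by
        intro h
        exact hne2 (by rw [hSx, h, hS2])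
      have hgx : g x < 0 := hneg x (by omega) (by omega)
      rw [hSx, Finset.sum_insert hxS.2]
      linarith
    · obtain ⟨y, hyP, hyS⟩ := Finset.not_subset.mp hPS
      have hyPS : y ∈ P \ S := Finset.mem_sdiff.mpr ⟨hyP, hyS⟩
      have hpossum : 0 < ∑ j ∈ P \ S, g j := by
        apply Finset.sum_pos
        · intro j hj
          rw [Finset.mem_sdiff] at hj
          have := (hPmem j).1 hj.1
          exact hpos j (by omega) (by omega) (by omega)
        · exact ⟨y, hyPS⟩
      have hnegsum : (∑ j ∈ S \ P, g j) ≤ 0 :=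
        Finset.sum_nonpos hdiff_nonpos
      linarith
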